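/- For every natural number n and every t ∈ [1/2, 1], the real number E(t) := ((2^{n+1} − 1)·t + (1 − 2ⁿ)) / ((2^{n+1} − 2)·t + (2 − 2ⁿ)) lies in [1/2, 1] and satisfies g₁^[n](E(t)) = t. (Equivalently, g₁^{−n}(t) = E(t) on [1/2, 1].) -/

import Mathlib

/-- The element `g₁` of the Lodha–Moore group as a piecewise fractional linear map. -/
noncomputable def g₁ (t : ℝ) : ℝ :=
  if t ≤ 0 then t
  else if t ≤ 1 / 2 then 2 * t / (2 * t + 1)
  else if t ≤ 1 then 1 / (3 - 2 * t)
  else t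

lemma g₁_on_half_one {x : ℝ} (hx : x ∈ Set.Icc (1/2 : ℝ) 1) : g₁ x = 1 / (3 - 2 * x) := by
  obtain ⟨h1, h2⟩ := hx
  unfold g₁
  rw [if_neg (by linarith)]
  by_cases h : x ≤ 1/2
  · have hx2 : x = 1/2 := le_antisymm h h1
    subst hx2; norm_num
  · rw [if_neg h, if_pos h2]

/-- Formula for the `n`-th iterate of `g₁⁻¹` on `[1/2, 1]`: the point
`E(t) = ((2^(n+1) − 1)·t + (1 − 2^n)) / ((2^(n+1) − 2)·t + (2 − 2^n))`
lies in `[1/2, 1]` and is mapped to `t` by `g₁^[n]`. -/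
theorem g₁_inv_iterate_formula (n : ℕ) (t : ℝ) (ht : t ∈ Set.Icc (1 / 2 : ℝ) 1) :
    ((2 ^ (n + 1) - 1) * t + (1 - 2 ^ n)) / ((2 ^ (n + 1) - 2) * t + (2 - 2 ^ n))
        ∈ Set.Icc (1 / 2 : ℝ) 1 ∧
    g₁^[n] (((2 ^ (n + 1) - 1) * t + (1 - 2 ^ n))
        / ((2 ^ (n + 1) - 2) * t + (2 - 2 ^ n))) = t := by
  obtain ⟨ht1, ht2⟩ := ht
  induction n with
  | zero =>
    norm_num
    exact ⟨ht1, ht2⟩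
  | succ n ih =>
    obtain ⟨ihmem, ihit⟩ := ih
    have ha1 : (1:ℝ) ≤ 2 ^ n := one_le_pow₀ (by norm_num)
    have hDn : (0:ℝ) < (2 ^ (n + 1) - 2) * t + (2 - 2 ^ n) := by
      rw [pow_succ]
      nlinarith [mul_nonneg (by linarith : (0:ℝ) ≤ 2^n - 1) (by linarith : (0:ℝ) ≤ 2*t-1)]
    have hD : (0:ℝ) < (2 ^ (n + 1 + 1) - 2) * t + (2 - 2 ^ (n + 1)) := by
      rw [pow_succ, pow_succ]
      nlinarith [mul_nonneg (by linarith : (0:ℝ) ≤ 2^n*2 - 1) (by linarith : (0:ℝ) ≤ 2*t-1)]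
    have hmem : ((2 ^ (n + 1 + 1) - 1) * t + (1 - 2 ^ (n + 1)))
        / ((2 ^ (n + 1 + 1) - 2) * t + (2 - 2 ^ (n + 1))) ∈ Set.Icc (1/2 : ℝ) 1 := by
      constructor
      · rw [le_div_iff₀ hD, pow_succ, pow_succ]
        nlinarith [mul_nonneg (by positivity : (0:ℝ) ≤ (2:ℝ)^n) (by linarith : (0:ℝ) ≤ 2*t-1)]
      · rw [div_le_one hD]
        nlinarith
    refine ⟨by simpa using hmem, ?_⟩
    rw [Function.iterate_succ_apply]
    have hg : g₁ (((2 ^ (n + 1 + 1) - 1) * t + (1 - 2 ^ (n + 1)))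
        / ((2 ^ (n + 1 + 1) - 2) * t + (2 - 2 ^ (n + 1))))
        = ((2 ^ (n + 1) - 1) * t + (1 - 2 ^ n)) / ((2 ^ (n + 1) - 2) * t + (2 - 2 ^ n)) := by
      rw [g₁_on_half_one hmem]
      have h3 : (0:ℝ) < 3 - 2 * (((2 ^ (n + 1 + 1) - 1) * t + (1 - 2 ^ (n + 1)))
          / ((2 ^ (n + 1 + 1) - 2) * t + (2 - 2 ^ (n + 1)))) := by
        have := hmem.2; linarith
      rw [div_eq_div_iff h3.ne' hDn.ne']
      have key : 3 - 2 * (((2 ^ (n + 1 + 1) - 1) * t + (1 - 2 ^ (n + 1)))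
          / ((2 ^ (n + 1 + 1) - 2) * t + (2 - 2 ^ (n + 1))))
          = (3 * ((2 ^ (n + 1 + 1) - 2) * t + (2 - 2 ^ (n + 1))) - 2 * ((2 ^ (n + 1 + 1) - 1) * t + (1 - 2 ^ (n + 1))))
            / ((2 ^ (n + 1 + 1) - 2) * t + (2 - 2 ^ (n + 1))) := by
        rw [eq_div_iff hD.ne']
        linear_combination (-2) * div_mul_cancel₀ ((2 ^ (n + 1 + 1) - 1) * t + (1 - 2 ^ (n + 1))) hD.ne'
      rw [key, mul_div_assoc', eq_div_iff hD.ne']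
      ring_nf
    rw [hg]
    exact ihit
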